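/- arXiv:1609.02657 — 5 statements merged into one kernel-verified Lean document; each statement's English description precedes it below -/
import Mathlib

section
/- For the path P_n on n vertices (n ≥ 1), the maximum cardinality of a convexly independent set equals 2·⌊n/3⌋ + (n mod 3). -/
/-- A set `S` of vertices is P3-convex if every vertex outside `S`
has at most one neighbor in `S`. -/
def P3Convex {V : Type*} (G : SimpleGraph V) (S : Set V) : Prop :=
  ∀ x ∉ S, ({y | y ∈ S ∧ G.Adj x y} : Set V).Subsingleton

/-- The P3-convex hull of `A`: the intersection of all P3-convex sets containing `A`. -/
def p3Hull {V : Type*} (G : SimpleGraph V) (A : Set V) : Set V :=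
  ⋂₀ {C : Set V | P3Convex G C ∧ A ⊆ C}

/-- A set `S` is convexly independent if no `x ∈ S` lies in the hull of `S \ {x}`. -/
def ConvIndep {V : Type*} (G : SimpleGraph V) (S : Set V) : Prop :=
  ∀ x ∈ S, x ∉ p3Hull G (S \ {x})

/-- The maximum cardinality of a convexly independent set. -/
noncomputable def betaC {V : Type*} (G : SimpleGraph V) : ℕ :=
  sSup {n | ∃ S : Set V, ConvIndep G S ∧ S.ncard = n}

open SimpleGraph

/-- A vertex whose two neighbors are in `A` lies in the hull. -/
lemma mem_hull_of_mid {n : ℕ} {A : Set (Fin n)} {a x b : Fin n}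
    (ha : a ∈ A) (hb : b ∈ A) (hax : (a : ℕ) + 1 = x) (hxb : (x : ℕ) + 1 = b) :
    x ∈ p3Hull (pathGraph n) A := by
  rw [p3Hull, Set.mem_sInter]
  rintro C ⟨hconv, hsub⟩
  by_contra hx
  have h := hconv x hx
  have hab : a ≠ b := by
    intro h
    have : (a : ℕ) = (b : ℕ) := congrArg Fin.val h
    omega
  exact hab (h ⟨hsub ha, pathGraph_adj.mpr (Or.inr hax)⟩
    ⟨hsub hb, pathGraph_adj.mpr (Or.inl hxb)⟩)

/-- One-step closure of `A`. -/
def Mid {n : ℕ} (A : Set (Fin n)) : Set (Fin n) :=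
  A ∪ {x | ∃ a ∈ A, ∃ b ∈ A, (a : ℕ) + 1 = x ∧ (x : ℕ) + 1 = b}

lemma mid_convex {n : ℕ} (A : Set (Fin n)) : P3Convex (pathGraph n) (Mid A) := by
  intro x hx y hy z hz
  obtain ⟨hyM, hyadj⟩ := hy
  obtain ⟨hzM, hzadj⟩ := hz
  rw [pathGraph_adj] at hyadj hzadj
  have key : ∀ w : Fin n, w ∈ Mid A → ((x : ℕ) + 1 = w ∨ (w : ℕ) + 1 = x) → w ∈ A := by
    intro w hw hadj
    rcases hw with hw | ⟨a, ha, b, hb, hab1, hab2⟩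
    · exact hw
    · exfalso
      rcases hadj with h | h
      · have hax : a = x := Fin.ext (by omega)
        exact hx (Or.inl (hax ▸ ha))
      · have hbx : b = x := Fin.ext (by omega)
        exact hx (Or.inl (hbx ▸ hb))
  have hyA := key y hyM hyadj
  have hzA := key z hzM hzadj
  by_contra hyz
  have hvy : (y : ℕ) ≠ (z : ℕ) := fun h => hyz (Fin.ext h)
  rcases hyadj with h1 | h1 <;> rcases hzadj with h2 | h2
  · omega
  · exact hx (Or.inr ⟨z, hzA, y, hyA, by omega, by omega⟩)
  · exact hx (Or.inr ⟨y, hyA, z, hzA, by omega, by omega⟩)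
  · omega

lemma hull_subset_mid {n : ℕ} (A : Set (Fin n)) :
    p3Hull (pathGraph n) A ⊆ Mid A :=
  Set.sInter_subset_of_mem ⟨mid_convex A, Set.subset_union_left⟩

/-- Convex independence in the path graph means: no three consecutive vertices. -/
lemma convIndep_iff {n : ℕ} (S : Set (Fin n)) :
    ConvIndep (pathGraph n) S ↔
      ∀ x ∈ S, ¬ ∃ a ∈ S, ∃ b ∈ S, (a : ℕ) + 1 = x ∧ (x : ℕ) + 1 = b := by
  constructor
  · rintro h x hx ⟨a, ha, b, hb, h1, h2⟩
    apply h x hx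
    have hax : a ≠ x := by intro hh; have := congrArg Fin.val hh; omega
    have hbx : b ≠ x := by intro hh; have := congrArg Fin.val hh; omega
    exact mem_hull_of_mid ⟨ha, hax⟩ ⟨hb, hbx⟩ h1 h2
  · intro h x hx hmem
    have := hull_subset_mid (S \ {x}) hmem
    rcases this with h1 | ⟨a, ha, b, hb, h1, h2⟩
    · exact h1.2 rfl
    · exact h x hx ⟨a, ha.1, b, hb.1, h1, h2⟩

/-- Upper bound on the size of a subset of `[0,n)` with no three consecutive elements. -/
lemma nat_upper : ∀ (n : ℕ) (T : Finset ℕ), (∀ i ∈ T, i < n) →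
    (∀ i, ¬(i ∈ T ∧ i + 1 ∈ T ∧ i + 2 ∈ T)) → T.card ≤ 2 * (n / 3) + n % 3 := by
  intro n
  induction n using Nat.strong_induction_on with
  | _ n ih =>
    intro T hTn hT3
    by_cases h3 : n < 3
    · have hsub : T ⊆ Finset.range n := fun i hi => Finset.mem_range.mpr (hTn i hi)
      have := Finset.card_le_card hsub
      rw [Finset.card_range] at this
      omega
    · push_neg at h3
      classical
      set T1 := T.filter (fun i => i < n - 3) with hT1
      set T2 := T.filter (fun i => ¬ i < n - 3) with hT2
      have hcard : T1.card + T2.card = T.card :=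
        Finset.card_filter_add_card_filter_not _
      have h1 : T1.card ≤ 2 * ((n - 3) / 3) + (n - 3) % 3 := by
        apply ih (n - 3) (by omega) T1 (fun i hi => (Finset.mem_filter.mp hi).2)
        rintro i ⟨hi, hi1, hi2⟩
        have m0 := Finset.mem_filter.mp hi
        have m1 := Finset.mem_filter.mp hi1
        have m2 := Finset.mem_filter.mp hi2
        exact hT3 i ⟨m0.1, m1.1, m2.1⟩
      have h2 : T2.card ≤ 2 := by
        have hmiss : ¬((n - 3) ∈ T ∧ (n - 2) ∈ T ∧ (n - 1) ∈ T) := by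
          have := hT3 (n - 3)
          have e1 : n - 3 + 1 = n - 2 := by omega
          have e2 : n - 3 + 2 = n - 1 := by omega
          rwa [e1, e2] at this
        have : ∃ m ∈ ({n - 3, n - 2, n - 1} : Finset ℕ), m ∉ T := by
          by_contra hc
          push_neg at hc
          exact hmiss ⟨hc _ (by simp), hc _ (by simp), hc _ (by simp)⟩
        obtain ⟨m, hm, hmT⟩ := this
        have hsub : T2 ⊆ ({n - 3, n - 2, n - 1} : Finset ℕ).erase m := by
          intro i hi
          have hmem := Finset.mem_filter.mp hi
          have hlt := hTn i hmem.1
          apply Finset.mem_erase.mpr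
          constructor
          · intro he; exact hmT (he ▸ hmem.1)
          · simp only [Finset.mem_insert, Finset.mem_singleton]
            omega
        have hc1 : (({n - 3, n - 2, n - 1} : Finset ℕ)).card ≤ 3 := by
          apply le_trans (Finset.card_insert_le _ _)
          have := Finset.card_insert_le (n - 2) ({n - 1} : Finset ℕ)
          simp at this ⊢
          omega
        have := Finset.card_le_card hsub
        have := Finset.card_erase_of_mem hm
        omega
      omega

lemma count_lower (n : ℕ) :
    ((Finset.range n).filter (fun i => ¬ i % 3 = 2)).card = 2 * (n / 3) + n % 3 := by
  induction n with
  | zero => simp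
  | succ n ih =>
    rw [Finset.range_add_one, Finset.filter_insert]
    by_cases h : ¬ n % 3 = 2
    · rw [if_pos h, Finset.card_insert_of_notMem (by simp)]
      omega
    · rw [if_neg h]
      push_neg at h
      omega

lemma lower_card (n : ℕ) :
    ({x : Fin n | ¬ (x : ℕ) % 3 = 2}).ncard = 2 * (n / 3) + n % 3 := by
  classical
  rw [Set.ncard_eq_toFinset_card', Set.toFinset_setOf]
  rw [Finset.card_filter]
  rw [Fin.sum_univ_eq_sum_range (fun i => if ¬ i % 3 = 2 then 1 else 0) n]
  rw [← Finset.card_filter]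
  exact count_lower n

theorem betaC_pathGraph (n : ℕ) (hn : 1 ≤ n) :
    betaC (SimpleGraph.pathGraph n) = 2 * (n / 3) + n % 3 := by
  classical
  apply le_antisymm
  · apply csSup_le
    · exact ⟨0, ∅, fun x hx => absurd hx (Set.notMem_empty x), by simp⟩
    · rintro m ⟨S, hS, rfl⟩
      rw [convIndep_iff] at hS
      set T : Finset ℕ := S.toFinset.image Fin.val with hT
      have hcardT : T.card = S.ncard := by
        rw [hT, Finset.card_image_of_injective _ Fin.val_injective,
          Set.ncard_eq_toFinset_card']
      rw [← hcardT]
      apply nat_upper n T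
      · intro i hi
        obtain ⟨x, _, rfl⟩ := Finset.mem_image.mp hi
        exact x.isLt
      · rintro i ⟨hi, hi1, hi2⟩
        obtain ⟨a, haS, ha⟩ := Finset.mem_image.mp hi
        obtain ⟨x, hxS, hx⟩ := Finset.mem_image.mp hi1
        obtain ⟨b, hbS, hb⟩ := Finset.mem_image.mp hi2
        rw [Set.mem_toFinset] at haS hxS hbS
        exact hS x hxS ⟨a, haS, b, hbS, by omega, by omega⟩
  · apply le_csSup
    · refine ⟨n, ?_⟩
      rintro m ⟨S, _, rfl⟩
      calc S.ncard ≤ (Set.univ : Set (Fin n)).ncard :=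
            Set.ncard_le_ncard (Set.subset_univ S) (Set.toFinite _)
        _ = n := by rw [Set.ncard_univ]; simp
    · refine ⟨{x : Fin n | ¬ (x : ℕ) % 3 = 2}, ?_, lower_card n⟩
      rw [convIndep_iff]
      rintro x hx ⟨a, ha, b, hb, h1, h2⟩
      simp only [Set.mem_setOf_eq] at hx ha hb
      omega
end

section
/- Let G be the join of graphs G1 and G2 (every vertex of G1 adjacent to every vertex of G2). If S is a convexly independent set of G containing at least one vertex from G1 and at least one vertex from G2, then |S| = 2. -/
/-- The join of two graphs: disjoint union plus all edges between the two sides. -/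
def joinGraph {α β : Type*} (G : SimpleGraph α) (H : SimpleGraph β) :
    SimpleGraph (α ⊕ β) where
  Adj u v := match u, v with
    | Sum.inl a, Sum.inl b => G.Adj a b
    | Sum.inr a, Sum.inr b => H.Adj a b
    | Sum.inl _, Sum.inr _ => True
    | Sum.inr _, Sum.inl _ => True
  symm := ⟨by rintro (a | a) (b | b) h <;> first | exact h.symm | trivial⟩
  loopless := ⟨by rintro (a | a) h <;> first | exact G.irrefl h | exact H.irrefl h⟩

theorem convIndep_join_both_sides {α β : Type*} (G₁ : SimpleGraph α) (G₂ : SimpleGraph β)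
    (S : Set (α ⊕ β)) (hS : ConvIndep (joinGraph G₁ G₂) S)
    (h₁ : ∃ a : α, Sum.inl a ∈ S) (h₂ : ∃ b : β, Sum.inr b ∈ S) :
    S.ncard = 2 := by
  obtain ⟨a, ha⟩ := h₁
  obtain ⟨b, hb⟩ := h₂
  have key : ∀ u ∈ S, ∀ v ∈ S, ∀ w ∈ S, v ≠ u → w ≠ u → v ≠ w →
      (joinGraph G₁ G₂).Adj u v → (joinGraph G₁ G₂).Adj u w → False := by
    intro u hu v hv w hw hvu hwu hvw hadv hadw
    apply hS u hu
    intro C hC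
    obtain ⟨hconv, hsub⟩ := hC
    by_contra huC
    have hsub' := hconv u huC
    have hvC : v ∈ C := hsub ⟨hv, hvu⟩
    have hwC : w ∈ C := hsub ⟨hw, hwu⟩
    exact hvw (hsub' ⟨hvC, hadv⟩ ⟨hwC, hadw⟩)
  by_cases h : ∃ x ∈ S, x ≠ Sum.inl a ∧ x ≠ Sum.inr b
  · exfalso
    obtain ⟨x, hx, hxa, hxb⟩ := h
    cases x with
    | inl a' =>
        exact key (Sum.inr b) hb (Sum.inl a) ha (Sum.inl a') hx
          (by simp) (by simp) (fun hh => hxa hh.symm) trivial trivial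
    | inr b' =>
        exact key (Sum.inl a) ha (Sum.inr b) hb (Sum.inr b') hx
          (by simp) (by simp) (fun hh => hxb hh.symm) trivial trivial
  · push_neg at h
    have hSeq : S = {Sum.inl a, Sum.inr b} := by
      apply Set.eq_of_subset_of_subset
      · intro x hx
        rcases eq_or_ne x (Sum.inl a) with h' | h'
        · exact Or.inl h'
        · exact Or.inr (h x hx h')
      · rintro x (rfl | rfl) <;> assumption
    rw [hSeq, Set.ncard_pair (by simp)]
end

section
/- Let S be a set of vertices of a graph G with |S| ≥ 2 and suppose S induces a clique after adding all edges within S. Then for every vertex x ∈ σ(S) \ S there exist two paths from x to S, inside σ(S), that are vertex-disjoint except for x; in particular no single vertex c ∈ σ(S) \ {x} separates x from S within the induced subgraph on σ(S). -/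
section Aux

variable {V : Type*} (G : SimpleGraph V) (S : Set V)

/-- Inductive description of the P3-hull: vertices of `S`, together with vertices
having two distinct already-reached neighbors. -/
inductive Reach : V → Prop
  | base {v : V} (h : v ∈ S) : Reach v
  | step {v y z : V} (hyz : y ≠ z) (hy : G.Adj v y) (hz : G.Adj v z)
      (ry : Reach y) (rz : Reach z) : Reach v

variable {G S}

lemma subset_p3Hull : S ⊆ p3Hull G S := fun _ hx => fun _ hC => hC.2 hx

lemma p3Hull_p3convex : P3Convex G (p3Hull G S) := by
  intro w hw
  simp only [p3Hull, Set.mem_sInter, not_forall] at hw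
  obtain ⟨C, hC, hwC⟩ := hw
  intro a ha b hb
  obtain ⟨ha1, ha2⟩ := ha
  obtain ⟨hb1, hb2⟩ := hb
  exact hC.1 w hwC ⟨ha1 C hC, ha2⟩ ⟨hb1 C hC, hb2⟩

lemma reach_mem_hull {v : V} (h : Reach G S v) : v ∈ p3Hull G S := by
  induction h with
  | base h => exact subset_p3Hull h
  | step hyz hy hz ry rz ihy ihz =>
    by_contra hv
    exact hyz (p3Hull_p3convex _ hv ⟨ihy, hy⟩ ⟨ihz, hz⟩)

lemma hull_subset_reach : p3Hull G S ⊆ {v | Reach G S v} := by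
  intro v hv
  refine hv {v | Reach G S v} ⟨?_, fun w hw => Reach.base hw⟩
  intro w hw a ha b hb
  by_contra hab
  exact hw (Reach.step hab ha.2 hb.2 ha.1 hb.1)

/-- split a walk at its first vertex in `A`. -/
lemma firstHit {v b : V} (p : G.Walk v b) (A : Set V) :
    (∀ w ∈ p.support, w ∉ A) ∨
    ∃ u, u ∈ A ∧ ∃ q : G.Walk v u,
      (∀ w ∈ q.support, w ∈ p.support) ∧ (∀ w ∈ q.support, w ∈ A → w = u) := by
  induction p with
  | @nil v =>
    by_cases hv : v ∈ A
    · exact Or.inr ⟨v, hv, SimpleGraph.Walk.nil, by simp, by simp⟩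
    · exact Or.inl (by simpa using hv)
  | @cons v c b h p ih =>
    by_cases hv : v ∈ A
    · exact Or.inr ⟨v, hv, SimpleGraph.Walk.nil, by simp, by simp⟩
    · rcases ih with hnone | ⟨u, hu, q, hsub, hfirst⟩
      · refine Or.inl ?_
        intro w hw
        rw [SimpleGraph.Walk.support_cons, List.mem_cons] at hw
        rcases hw with rfl | hw
        · exact hv
        · exact hnone w hw
      · refine Or.inr ⟨u, hu, SimpleGraph.Walk.cons h q, ?_, ?_⟩
        · intro w hw
          rw [SimpleGraph.Walk.support_cons, List.mem_cons] at hw ⊢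
          rcases hw with rfl | hw
          · exact Or.inl rfl
          · exact Or.inr (hsub w hw)
        · intro w hw hwA
          rw [SimpleGraph.Walk.support_cons, List.mem_cons] at hw
          rcases hw with rfl | hw
          · exact absurd hwA hv
          · exact hfirst w hw hwA

/-- In a path, the take-part and drop-part meet only at the split vertex. -/
lemma take_drop_inter [DecidableEq V] {y b u : V} {p : G.Walk y b} (hp : p.IsPath)
    (h : u ∈ p.support) {w : V} (hw1 : w ∈ (p.takeUntil u h).support)
    (hw2 : w ∈ (p.dropUntil u h).support) : w = u := by
  have hnd : p.support.Nodup := hp.support_nodup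
  rw [← SimpleGraph.Walk.take_spec p h, SimpleGraph.Walk.support_append] at hnd
  have hdisj := List.disjoint_of_nodup_append hnd
  rw [SimpleGraph.Walk.support_eq_cons (p.dropUntil u h), List.mem_cons] at hw2
  rcases hw2 with rfl | hw2
  · rfl
  · exact absurd (hdisj hw1) (by simp [hw2])

/-- In a path from `y`, if `y` lies on the drop-part at `u`, then `u = y`. -/
lemma start_mem_drop [DecidableEq V] {y b u : V} {p : G.Walk y b} (hp : p.IsPath)
    (h : u ∈ p.support) (hy : y ∈ (p.dropUntil u h).support) : u = y :=
  (take_drop_inter hp h (p.takeUntil u h).start_mem_support hy).symm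

/-- The invariant: two paths to `S` inside the hull, meeting only at the start. -/
def Good (G : SimpleGraph V) (S : Set V) (v : V) : Prop :=
  ∃ s₁ ∈ S, ∃ s₂ ∈ S, ∃ p₁ : G.Walk v s₁, ∃ p₂ : G.Walk v s₂,
    p₁.IsPath ∧ p₂.IsPath ∧
    (∀ w ∈ p₁.support, w ∈ p3Hull G S) ∧ (∀ w ∈ p₂.support, w ∈ p3Hull G S) ∧
    (∀ w ∈ p₁.support, w ∈ p₂.support → w = v)

lemma good_of_mem_support {x y : V} (hxy : G.Adj x y) {a1 a2 : V}
    (ha1 : a1 ∈ S) (ha2 : a2 ∈ S) (A1 : G.Walk y a1) (A2 : G.Walk y a2)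
    (hp1 : A1.IsPath)
    (hh1 : ∀ w ∈ A1.support, w ∈ p3Hull G S) (hh2 : ∀ w ∈ A2.support, w ∈ p3Hull G S)
    (hd : ∀ w ∈ A1.support, w ∈ A2.support → w = y)
    (hx : x ∈ A1.support) : Good G S x := by
  classical
  refine ⟨a1, ha1, a2, ha2, (A1.dropUntil x hx).bypass,
    (((A1.takeUntil x hx).reverse).append A2).bypass,
    SimpleGraph.Walk.bypass_isPath _, SimpleGraph.Walk.bypass_isPath _, ?_, ?_, ?_⟩
  · intro w hw
    exact hh1 w (A1.support_dropUntil_subset hx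
      (SimpleGraph.Walk.support_bypass_subset _ hw))
  · intro w hw
    have hw' := SimpleGraph.Walk.support_bypass_subset _ hw
    rw [SimpleGraph.Walk.mem_support_append_iff] at hw'
    rcases hw' with hw' | hw'
    · rw [SimpleGraph.Walk.support_reverse, List.mem_reverse] at hw'
      exact hh1 w (A1.support_takeUntil_subset hx hw')
    · exact hh2 w hw'
  · intro w hw1 hw2
    have hw1' : w ∈ (A1.dropUntil x hx).support :=
      SimpleGraph.Walk.support_bypass_subset _ hw1
    have hw2' := SimpleGraph.Walk.support_bypass_subset _ hw2
    rw [SimpleGraph.Walk.mem_support_append_iff] at hw2'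
    rcases hw2' with hw2' | hw2'
    · rw [SimpleGraph.Walk.support_reverse, List.mem_reverse] at hw2'
      exact take_drop_inter hp1 hx hw2' hw1'
    · -- w ∈ A2 and w ∈ drop ⊆ A1, so w = y, so y ∈ drop, so x = y, contradiction
      have hwy : w = y := hd w (A1.support_dropUntil_subset hx hw1') hw2'
      subst hwy
      exact absurd (start_mem_drop hp1 hx hw1') hxy.ne

/-- The cross construction: go from `x` to `z`, along `B1a` to its first `A`-hit `u ∈ A1`,
then along `A1` to `S`; second walk through `y` along `A2`. -/
lemma good_cross {x y z u : V} (hxy : G.Adj x y) (hxz : G.Adj x z) {a1 a2 : V}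
    (ha1 : a1 ∈ S) (ha2 : a2 ∈ S) (A1 : G.Walk y a1) (A2 : G.Walk y a2)
    (hp1 : A1.IsPath)
    (hh1 : ∀ w ∈ A1.support, w ∈ p3Hull G S) (hh2 : ∀ w ∈ A2.support, w ∈ p3Hull G S)
    (hd : ∀ w ∈ A1.support, w ∈ A2.support → w = y)
    (hxh : x ∈ p3Hull G S) (hxA1 : x ∉ A1.support) (hxA2 : x ∉ A2.support)
    (B1a : G.Walk z u) (hBh : ∀ w ∈ B1a.support, w ∈ p3Hull G S)
    (hxB : x ∉ B1a.support)
    (hfirst : ∀ w ∈ B1a.support, (w ∈ A1.support ∨ w ∈ A2.support) → w = u)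
    (hu : u ∈ A1.support) (huy : u ≠ y) : Good G S x := by
  classical
  have huA2 : u ∉ A2.support := fun h => huy (hd u hu h)
  refine ⟨a1, ha1, a2, ha2,
    (SimpleGraph.Walk.cons hxz (B1a.append (A1.dropUntil u hu))).bypass,
    (SimpleGraph.Walk.cons hxy A2).bypass,
    SimpleGraph.Walk.bypass_isPath _, SimpleGraph.Walk.bypass_isPath _, ?_, ?_, ?_⟩
  · intro w hw
    have hw' := SimpleGraph.Walk.support_bypass_subset _ hw
    rw [SimpleGraph.Walk.support_cons, List.mem_cons] at hw'
    rcases hw' with rfl | hw'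
    · exact hxh
    · rw [SimpleGraph.Walk.mem_support_append_iff] at hw'
      rcases hw' with hw' | hw'
      · exact hBh w hw'
      · exact hh1 w (A1.support_dropUntil_subset hu hw')
  · intro w hw
    have hw' := SimpleGraph.Walk.support_bypass_subset _ hw
    rw [SimpleGraph.Walk.support_cons, List.mem_cons] at hw'
    rcases hw' with rfl | hw'
    · exact hxh
    · exact hh2 w hw'
  · intro w hw1 hw2
    have hw1' := SimpleGraph.Walk.support_bypass_subset _ hw1
    have hw2' := SimpleGraph.Walk.support_bypass_subset _ hw2
    rw [SimpleGraph.Walk.support_cons, List.mem_cons] at hw1' hw2'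
    rcases hw1' with rfl | hw1'
    · rfl
    rcases hw2' with rfl | hw2'
    · rfl
    rw [SimpleGraph.Walk.mem_support_append_iff] at hw1'
    rcases hw1' with hw1' | hw1'
    · -- w ∈ B1a and w ∈ A2 : then w = u, but u ∉ A2
      exact absurd hw2' (by rw [hfirst w hw1' (Or.inr hw2')]; exact huA2)
    · -- w ∈ drop of A1 and w ∈ A2 : then w = y, so y ∈ drop, so u = y
      have hwy : w = y := hd w (A1.support_dropUntil_subset hu hw1') hw2'
      subst hwy
      exact absurd (start_mem_drop hp1 hu hw1') huy

lemma good_disjoint {x y z : V} (hxy : G.Adj x y) (hxz : G.Adj x z) {a1 b1 : V}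
    (ha1 : a1 ∈ S) (hb1 : b1 ∈ S) (A1 : G.Walk y a1) (B1 : G.Walk z b1)
    (hh1 : ∀ w ∈ A1.support, w ∈ p3Hull G S) (hh2 : ∀ w ∈ B1.support, w ∈ p3Hull G S)
    (hxh : x ∈ p3Hull G S)
    (hdisj : ∀ w ∈ B1.support, w ∉ A1.support) : Good G S x := by
  classical
  refine ⟨a1, ha1, b1, hb1, (SimpleGraph.Walk.cons hxy A1).bypass,
    (SimpleGraph.Walk.cons hxz B1).bypass,
    SimpleGraph.Walk.bypass_isPath _, SimpleGraph.Walk.bypass_isPath _, ?_, ?_, ?_⟩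
  · intro w hw
    have hw' := SimpleGraph.Walk.support_bypass_subset _ hw
    rw [SimpleGraph.Walk.support_cons, List.mem_cons] at hw'
    rcases hw' with rfl | hw'
    · exact hxh
    · exact hh1 w hw'
  · intro w hw
    have hw' := SimpleGraph.Walk.support_bypass_subset _ hw
    rw [SimpleGraph.Walk.support_cons, List.mem_cons] at hw'
    rcases hw' with rfl | hw'
    · exact hxh
    · exact hh2 w hw'
  · intro w hw1 hw2
    have hw1' := SimpleGraph.Walk.support_bypass_subset _ hw1
    have hw2' := SimpleGraph.Walk.support_bypass_subset _ hw2
    rw [SimpleGraph.Walk.support_cons, List.mem_cons] at hw1' hw2'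
    rcases hw1' with rfl | hw1'
    · rfl
    rcases hw2' with rfl | hw2'
    · rfl
    exact absurd hw1' (hdisj w hw2')

lemma reach_good {v : V} (h : Reach G S v) : Good G S v := by
  classical
  induction h with
  | @base v hv =>
    exact ⟨v, hv, v, hv, SimpleGraph.Walk.nil, SimpleGraph.Walk.nil,
      SimpleGraph.Walk.IsPath.nil, SimpleGraph.Walk.IsPath.nil,
      by simpa using subset_p3Hull hv, by simpa using subset_p3Hull hv, by simp⟩
  | @step x y z hyz hxy hxz ry rz ihy ihz =>
    obtain ⟨a1, ha1, a2, ha2, A1, A2, hA1p, hA2p, hA1h, hA2h, hAd⟩ := ihy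
    obtain ⟨b1, hb1, b2, hb2, B1, B2, hB1p, hB2p, hB1h, hB2h, hBd⟩ := ihz
    have hAd' : ∀ w ∈ A2.support, w ∈ A1.support → w = y := fun w h1 h2 => hAd w h2 h1
    have hBd' : ∀ w ∈ B2.support, w ∈ B1.support → w = z := fun w h1 h2 => hBd w h2 h1
    have hxh : x ∈ p3Hull G S := reach_mem_hull (Reach.step hyz hxy hxz ry rz)
    -- dispose of the cases where x lies on one of the four paths
    by_cases hx1 : x ∈ A1.support
    · exact good_of_mem_support hxy ha1 ha2 A1 A2 hA1p hA1h hA2h hAd hx1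
    by_cases hx2 : x ∈ A2.support
    · exact good_of_mem_support hxy ha2 ha1 A2 A1 hA2p hA2h hA1h hAd' hx2
    by_cases hx3 : x ∈ B1.support
    · exact good_of_mem_support hxz hb1 hb2 B1 B2 hB1p hB1h hB2h hBd hx3
    by_cases hx4 : x ∈ B2.support
    · exact good_of_mem_support hxz hb2 hb1 B2 B1 hB2p hB2h hB1h hBd' hx4
    -- main case
    rcases firstHit B1 {w | w ∈ A1.support ∨ w ∈ A2.support} with hnone | ⟨u, hu, q, hqsub, hqfirst⟩
    · exact good_disjoint hxy hxz ha1 hb1 A1 B1 hA1h hB1h hxh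
        (fun w hw hw' => hnone w hw (Or.inl hw'))
    · have hqh : ∀ w ∈ q.support, w ∈ p3Hull G S := fun w hw => hB1h w (hqsub w hw)
      have hxq : x ∉ q.support := fun hw => hx3 (hqsub x hw)
      by_cases huy : u = y
      · -- y ∈ B1.support; analyze B2
        have hyB1 : y ∈ B1.support := by
          have := hqsub u q.end_mem_support
          rwa [huy] at this
        rcases firstHit B2 {w | w ∈ A1.support ∨ w ∈ A2.support} with hnone2 | ⟨u', hu', q', hqsub', hqfirst'⟩
        · exact good_disjoint hxy hxz ha1 hb2 A1 B2 hA1h hB2h hxh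
            (fun w hw hw' => hnone2 w hw (Or.inl hw'))
        · have hqh' : ∀ w ∈ q'.support, w ∈ p3Hull G S := fun w hw => hB2h w (hqsub' w hw)
          have hxq' : x ∉ q'.support := fun hw => hx4 (hqsub' x hw)
          have huy' : u' ≠ y := by
            rintro rfl
            exact hyz (hBd' u' (hqsub' u' q'.end_mem_support) hyB1)
          rcases hu' with hu' | hu'
          · exact good_cross hxy hxz ha1 ha2 A1 A2 hA1p hA1h hA2h hAd hxh hx1 hx2
              q' hqh' hxq' hqfirst' hu' huy'
          · exact good_cross hxy hxz ha2 ha1 A2 A1 hA2p hA2h hA1h hAd' hxh hx2 hx1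
              q' hqh' hxq' (fun w hw hw' => hqfirst' w hw hw'.symm) hu' huy'
      · rcases hu with hu | hu
        · exact good_cross hxy hxz ha1 ha2 A1 A2 hA1p hA1h hA2h hAd hxh hx1 hx2
            q hqh hxq hqfirst hu huy
        · exact good_cross hxy hxz ha2 ha1 A2 A1 hA2p hA2h hA1h hAd' hxh hx2 hx1
            q hqh hxq (fun w hw hw' => hqfirst w hw hw'.symm) hu huy

lemma reach_avoid {x : V} (h : Reach G S x) :
    ∀ c, c ≠ x → ∃ s ∈ S, ∃ p : G.Walk x s,
      (∀ v ∈ p.support, v ∈ p3Hull G S) ∧ c ∉ p.support := by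
  induction h with
  | @base v hv =>
    intro c hc
    exact ⟨v, hv, SimpleGraph.Walk.nil, by simpa using subset_p3Hull hv,
      by simpa using hc⟩
  | @step x y z hyz hxy hxz ry rz ihy ihz =>
    intro c hc
    have hxh : x ∈ p3Hull G S := reach_mem_hull (Reach.step hyz hxy hxz ry rz)
    by_cases hcy : c = y
    · obtain ⟨s, hs, p, hph, hcp⟩ := ihz c (by rw [hcy]; exact hyz)
      refine ⟨s, hs, SimpleGraph.Walk.cons hxz p, ?_, ?_⟩
      · intro w hw
        rw [SimpleGraph.Walk.support_cons, List.mem_cons] at hw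
        rcases hw with rfl | hw
        · exact hxh
        · exact hph w hw
      · rw [SimpleGraph.Walk.support_cons, List.mem_cons]
        rintro (rfl | hw)
        · exact hc rfl
        · exact hcp hw
    · obtain ⟨s, hs, p, hph, hcp⟩ := ihy c hcy
      refine ⟨s, hs, SimpleGraph.Walk.cons hxy p, ?_, ?_⟩
      · intro w hw
        rw [SimpleGraph.Walk.support_cons, List.mem_cons] at hw
        rcases hw with rfl | hw
        · exact hxh
        · exact hph w hw
      · rw [SimpleGraph.Walk.support_cons, List.mem_cons]
        rintro (rfl | hw)
        · exact hc rfl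
        · exact hcp hw

end Aux

theorem two_disjoint_paths_to_clique {V : Type*} (G : SimpleGraph V) (S : Set V)
    (hclique : G.IsClique S) (hcard : 2 ≤ S.ncard)
    (x : V) (hx : x ∈ p3Hull G S \ S) :
    (∃ s₁ ∈ S, ∃ s₂ ∈ S, ∃ p₁ : G.Walk x s₁, ∃ p₂ : G.Walk x s₂,
      (∀ v ∈ p₁.support, v ∈ p3Hull G S) ∧ (∀ v ∈ p₂.support, v ∈ p3Hull G S) ∧
      (∀ v ∈ p₁.support, v ∈ p₂.support → v = x)) ∧
    (∀ c ∈ p3Hull G S, c ≠ x →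
      ∃ s ∈ S, ∃ p : G.Walk x s,
        (∀ v ∈ p.support, v ∈ p3Hull G S) ∧ c ∉ p.support) := by
  have hr : Reach G S x := hull_subset_reach hx.1
  constructor
  · obtain ⟨s₁, hs₁, s₂, hs₂, p₁, p₂, _, _, h1, h2, h3⟩ := reach_good hr
    exact ⟨s₁, hs₁, s₂, hs₂, p₁, p₂, h1, h2, h3⟩
  · intro c _ hcx
    exact reach_avoid hr c hcx
end

section
/- Every irredundant set in a graph G is convexly independent; hence the maximum cardinality of an irredundant set is at most β_c(G). -/
/-- A set `S` is irredundant if `∂(S) = σ(S) \ ⋃_{x ∈ S} σ(S \ {x})` is nonempty. -/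
def Irredundant {V : Type*} (G : SimpleGraph V) (S : Set V) : Prop :=
  (p3Hull G S \ ⋃ x ∈ S, p3Hull G (S \ {x})).Nonempty

theorem irredundant_le_betaC {V : Type*} [Fintype V] (G : SimpleGraph V) :
    (∀ S : Set V, Irredundant G S → ConvIndep G S) ∧
    sSup {n | ∃ S : Set V, Irredundant G S ∧ S.ncard = n} ≤ betaC G := by
  have hsub : ∀ A : Set V, A ⊆ p3Hull G A := fun A a ha =>
    Set.mem_sInter.2 fun C hC => hC.2 ha
  have hconv : ∀ A : Set V, P3Convex G (p3Hull G A) := by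
    intro A x hx
    have : ∃ C, (P3Convex G C ∧ A ⊆ C) ∧ x ∉ C := by
      by_contra h; push_neg at h
      exact hx (Set.mem_sInter.2 fun C hC => h C hC)
    obtain ⟨C, hC, hxC⟩ := this
    intro y hy z hz
    exact hC.1 x hxC ⟨(Set.mem_sInter.1 hy.1) C hC, hy.2⟩
      ⟨(Set.mem_sInter.1 hz.1) C hC, hz.2⟩
  have hmin : ∀ (A C : Set V), P3Convex G C → A ⊆ C → p3Hull G A ⊆ C :=
    fun A C hC h => Set.sInter_subset_of_mem ⟨hC, h⟩
  have h1 : ∀ S : Set V, Irredundant G S → ConvIndep G S := by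
    intro S hS x hxS hx
    have hSsub : S ⊆ p3Hull G (S \ {x}) := by
      intro y hy
      by_cases hyx : y = x
      · exact hyx ▸ hx
      · exact hsub _ ⟨hy, hyx⟩
    have hhull : p3Hull G S ⊆ p3Hull G (S \ {x}) :=
      hmin _ _ (hconv _) hSsub
    obtain ⟨w, hw1, hw2⟩ := hS
    exact hw2 (Set.mem_iUnion₂.2 ⟨x, hxS, hhull hw1⟩)
  refine ⟨h1, ?_⟩
  rcases Set.eq_empty_or_nonempty
      {n | ∃ S : Set V, Irredundant G S ∧ S.ncard = n} with he | hne
  · rw [he, csSup_empty]; exact Nat.zero_le _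
  · apply csSup_le_csSup _ hne
    · rintro n ⟨S, hS, hn⟩
      exact ⟨S, h1 S hS, hn⟩
    · refine ⟨Fintype.card V, ?_⟩
      rintro n ⟨S, _, rfl⟩
      simpa [Set.ncard_univ] using Set.ncard_le_ncard (Set.subset_univ S) Set.finite_univ
end

section
/- If G is a connected cograph (P4-free graph) on at least two vertices that is the join of graphs with vertex sets A and B, and u is a vertex adjacent to all of V(G) (in the larger graph G + u), then any convexly independent set of G + u contained in A has at most 2 elements. -/
/-- The graph `G + u` obtained from `G` by adding a universal vertex (`none`). -/
def addUniversal {V : Type*} (G : SimpleGraph V) : SimpleGraph (Option V) where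
  Adj u v := match u, v with
    | some a, some b => G.Adj a b
    | some _, none => True
    | none, some _ => True
    | none, none => False
  symm := ⟨by rintro (_ | a) (_ | b) h <;> first | exact h.symm | trivial⟩
  loopless := ⟨by rintro (_ | a) h <;> first | exact h | exact G.loopless.irrefl a h⟩

theorem convIndep_cograph_join_universal {V : Type*} [Fintype V]
    (G : SimpleGraph V) (hcard : 2 ≤ Fintype.card V) (hconn : G.Connected)
    (hP4free : ∀ a b c d : V, a ≠ c → a ≠ d → b ≠ d →
      G.Adj a b → G.Adj b c → G.Adj c d →
      ¬ G.Adj a c → ¬ G.Adj a d → ¬ G.Adj b d → False)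
    (A B : Set V) (hA : A.Nonempty) (hB : B.Nonempty) (hdisj : Disjoint A B)
    (hcover : A ∪ B = Set.univ) (hjoin : ∀ a ∈ A, ∀ b ∈ B, G.Adj a b)
    (S : Set (Option V)) (hsub : S ⊆ some '' A)
    (hS : ConvIndep (addUniversal G) S) :
    S.ncard ≤ 2 := by
  classical
  by_contra h
  push_neg at h
  obtain ⟨x, hx, y, hy, z, hz, hxy, hxz, hyz⟩ := (Set.two_lt_ncard S.toFinite).mp h
  obtain ⟨a, ha, rfl⟩ := hsub hx
  obtain ⟨ay, hay, rfl⟩ := hsub hy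
  obtain ⟨az, haz, rfl⟩ := hsub hz
  obtain ⟨b₀, hb₀⟩ := hB
  apply hS _ hx
  intro C hC
  obtain ⟨hconv, hsubC⟩ := hC
  have hyC : some ay ∈ C := hsubC ⟨hy, by simp; exact fun e => hxy (by rw [e])⟩
  have hzC : some az ∈ C := hsubC ⟨hz, by simp; exact fun e => hxz (by rw [e])⟩
  have hyz' : (some ay : Option V) ≠ some az := hyz
  have hnone : (none : Option V) ∈ C := by
    by_contra hn
    exact hyz' (hconv none hn ⟨hyC, trivial⟩ ⟨hzC, trivial⟩)
  have hbC : (some b₀ : Option V) ∈ C := by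
    by_contra hb
    refine hyz' (hconv (some b₀) hb ⟨hyC, ?_⟩ ⟨hzC, ?_⟩)
    · exact (hjoin ay hay b₀ hb₀).symm
    · exact (hjoin az haz b₀ hb₀).symm
  by_contra hxC
  have := hconv (some a) hxC ⟨hnone, trivial⟩ ⟨hbC, hjoin a ha b₀ hb₀⟩
  exact (Option.some_ne_none b₀ this.symm)
end
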